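/- Let (S, M) and (B, B ∩ M) be reduced Noetherian local rings with B ⊆ S, \widehat{B} = \widehat{S}, such that f : Spec(S) → Spec(B), f(P) = P ∩ B, is surjective, f(P)S = P for every positive-height prime P of S, and f is injective on positive-height primes. Then for every minimal prime 𝔭 of B there exists a minimal prime P of S with P ∩ B = 𝔭 and dim(S/P) = dim(B/𝔭). -/

import Mathlib

section Aux

variable {R : Type*} [CommRing R]

lemma prime_eq_of_le_minimal {r p : Ideal R} (hr : r.IsPrime) (hp : p ∈ minimalPrimes R)
    (h : r ≤ p) : r = p :=
  le_antisymm h (hp.2 ⟨hr, bot_le⟩ h)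

lemma height_pos_iff_not_minimal {P : Ideal R} (hP : P.IsPrime) :
    0 < Order.height (⟨P, hP⟩ : PrimeSpectrum R) ↔ P ∉ minimalPrimes R := by
  rw [pos_iff_ne_zero, ne_eq, Order.height_eq_zero]
  constructor
  · intro h hmem
    refine h fun y hy => ?_
    have hy' : y.asIdeal = P := prime_eq_of_le_minimal y.2 hmem hy
    exact le_of_eq (PrimeSpectrum.ext hy'.symm)
  · intro h hmin
    refine h ⟨⟨hP, bot_le⟩, fun q hq hle => ?_⟩
    exact hmin (show (⟨q, hq.1⟩ : PrimeSpectrum R) ≤ ⟨P, hP⟩ from hle)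

theorem Module.Flat.exists_isPrime_comap_eq
    {R C : Type*} [CommRing R] [CommRing C] [Algebra R C] [Module.Flat R C]
    {p : Ideal R} (hp : p.IsPrime)
    (h : p.map (algebraMap R C) ≠ ⊤) :
    ∃ P : Ideal C, P.IsPrime ∧ P.comap (algebraMap R C) = p := by
  classical
  set q := p.map (algebraMap R C) with hq
  -- multiplication by `s ∉ p` is injective on `C ⧸ p • ⊤`
  have hsmul : ∀ s : R, s ∉ p → ∀ x : C ⧸ (p • ⊤ : Submodule R C), s • x = 0 → x = 0 := by
    intro s hs x hx
    set f : (R ⧸ p) →ₗ[R] (R ⧸ p) := s • LinearMap.id with hf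
    have hfinj : Function.Injective f := by
      rw [← LinearMap.ker_eq_bot]
      refine (Submodule.eq_bot_iff _).mpr fun a ha => ?_
      obtain ⟨y, rfl⟩ := Ideal.Quotient.mk_surjective a
      have h00 : s • (Ideal.Quotient.mk p y) = 0 := by
        simpa [hf] using ha
      have h0 : (Ideal.Quotient.mk p) (s * y) = 0 := by
        rw [map_mul, ← Ideal.Quotient.algebraMap_eq, ← Algebra.smul_def]
        exact h00
      rw [Ideal.Quotient.eq_zero_iff_mem] at h0 ⊢
      exact (hp.mem_or_mem h0).resolve_left hs
    have hT : Function.Injective (LinearMap.lTensor C f) :=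
      Module.Flat.lTensor_preserves_injective_linearMap f hfinj
    have hlt : LinearMap.lTensor C f = s • LinearMap.id := by
      rw [hf, LinearMap.lTensor_smul, LinearMap.lTensor_id]
    set E := TensorProduct.tensorQuotEquivQuotSMul C p with hE
    obtain ⟨y, rfl⟩ := E.surjective x
    have h1 : E (s • y) = 0 := by rw [map_smul]; exact hx
    have h2 : s • y = 0 := by
      apply E.injective; rw [h1, map_zero]
    have h3 : LinearMap.lTensor C f y = 0 := by
      rw [hlt]; simpa using h2
    have h4 : y = 0 := hT (by rw [h3, map_zero])
    rw [h4, map_zero]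
  set D := C ⧸ q
  set g : R →+* D := (Ideal.Quotient.mk q).comp (algebraMap R C) with hg
  set M : Submonoid D := Submonoid.map (g : R →* D) p.primeCompl with hM
  have h0M : (0 : D) ∉ M := by
    rintro ⟨s, hs, hs0⟩
    have hs0' : (Ideal.Quotient.mk q) (algebraMap R C s) = 0 := hs0
    have hmem : algebraMap R C s ∈ q := by
      rwa [Ideal.Quotient.eq_zero_iff_mem] at hs0' 
    have hmem' : s • (1 : C) ∈ (p • ⊤ : Submodule R C) := by
      rw [Ideal.smul_top_eq_map]
      simpa [← Algebra.algebraMap_eq_smul_one] using hmem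
    have hz : s • (Submodule.Quotient.mk (1 : C) : C ⧸ (p • ⊤ : Submodule R C)) = 0 := by
      rw [← Submodule.Quotient.mk_smul, Submodule.Quotient.mk_eq_zero]
      exact hmem'
    have h1 := hsmul s hs _ hz
    rw [Submodule.Quotient.mk_eq_zero] at h1
    rw [Ideal.smul_top_eq_map] at h1
    exact h ((Ideal.eq_top_iff_one _).mpr h1)
  set E' := Localization M
  have h1 : (1 : E') ≠ 0 := by
    intro h1
    have h2 : algebraMap D E' 1 = 0 := by simpa using h1
    obtain ⟨m, hm⟩ := (IsLocalization.map_eq_zero_iff M E' 1).mp h2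
    rw [mul_one] at hm
    exact h0M (hm ▸ m.2)
  haveI : Nontrivial E' := ⟨⟨1, 0, h1⟩⟩
  obtain ⟨m, hmmax⟩ := Ideal.exists_maximal E'
  haveI := hmmax
  set φ : C →+* E' := (algebraMap D E').comp (Ideal.Quotient.mk q) with hφ
  refine ⟨Ideal.comap φ m, Ideal.IsPrime.comap _, ?_⟩
  ext x
  simp only [Ideal.mem_comap]
  constructor
  · intro hx
    by_contra hxp
    have hu : IsUnit (φ (algebraMap R C x)) := by
      have : φ (algebraMap R C x) = algebraMap D E' (g x) := rfl
      rw [this]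
      exact IsLocalization.map_units E' (⟨g x, ⟨x, hxp, rfl⟩⟩ : M)
    exact hmmax.ne_top (m.eq_top_of_isUnit_mem hx hu)
  · intro hx
    have hq' : algebraMap R C x ∈ q := Ideal.mem_map_of_mem _ hx
    have : φ (algebraMap R C x) = 0 := by
      rw [hφ, RingHom.coe_comp, Function.comp_apply, Ideal.Quotient.eq_zero_iff_mem.mpr hq',
        map_zero]
    rw [this]
    exact m.zero_mem

theorem Module.Flat.exists_isPrime_le_comap_eq
    {R A : Type*} [CommRing R] [CommRing A] [Algebra R A] [Module.Flat R A]
    {P : Ideal A} (hP : P.IsPrime) {p : Ideal R} (hp : p.IsPrime)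
    (hle : p ≤ P.comap (algebraMap R A))
    (C : Type*) [CommRing C] [Algebra A C] [IsLocalization.AtPrime C P] :
    ∃ Q : Ideal A, Q.IsPrime ∧ Q ≤ P ∧ Q.comap (algebraMap R A) = p := by
  haveI := hP
  haveI : IsLocalRing C := IsLocalization.AtPrime.isLocalRing C P
  letI : Algebra R C := ((algebraMap A C).comp (algebraMap R A)).toAlgebra
  haveI : IsScalarTower R A C := IsScalarTower.of_algebraMap_eq fun x => rfl
  haveI : Module.Flat A C := IsLocalization.flat C P.primeCompl
  haveI : Module.Flat R C := Module.Flat.trans R A C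
  have hmap : p.map (algebraMap R C) ≠ ⊤ := by
    have hle2 : p.map (algebraMap R C) ≤ IsLocalRing.maximalIdeal C := by
      rw [Ideal.map_le_iff_le_comap]
      intro x hx
      have hx2 : algebraMap R C x = algebraMap A C (algebraMap R A x) := rfl
      rw [Ideal.mem_comap, hx2]
      have hx3 : algebraMap R A x ∈ (IsLocalRing.maximalIdeal C).comap (algebraMap A C) := by
        rw [show (IsLocalRing.maximalIdeal C).comap (algebraMap A C) = P from IsLocalization.AtPrime.comap_maximalIdeal C P]
        exact hle hx
      exact hx3
    intro htop
    exact (IsLocalRing.maximalIdeal.isMaximal C).ne_top (top_le_iff.mp (htop ▸ hle2))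
  obtain ⟨P', hP', hcom⟩ := Module.Flat.exists_isPrime_comap_eq hp hmap
  haveI := hP'
  refine ⟨P'.comap (algebraMap A C), Ideal.IsPrime.comap _, ?_, ?_⟩
  · intro a ha
    by_contra haP
    have hu : IsUnit (algebraMap A C a) :=
      IsLocalization.map_units C (⟨a, haP⟩ : P.primeCompl)
    exact hP'.ne_top (P'.eq_top_of_isUnit_mem ha hu)
  · rw [Ideal.comap_comap, ← IsScalarTower.algebraMap_eq, hcom]

theorem AdicCompletion.map_ne_top_of_ne_top {R : Type*} [CommRing R] {I : Ideal R} (hI : I ≠ ⊤) :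
    I.map (algebraMap R (AdicCompletion I R)) ≠ ⊤ := by
  intro h
  have h1 : (1 : AdicCompletion I R) ∈ I.map (algebraMap R (AdicCompletion I R)) := by
    rw [h]; trivial
  have h2 : (1 : R ⧸ I ^ 1) ∈
      Ideal.map (AdicCompletion.evalₐ I 1).toRingHom
        (I.map (algebraMap R (AdicCompletion I R))) := by
    have := Ideal.mem_map_of_mem (AdicCompletion.evalₐ I 1).toRingHom h1; rwa [map_one] at this
  have hcomp : (AdicCompletion.evalₐ I 1).toRingHom.comp (algebraMap R (AdicCompletion I R)) =
      Ideal.Quotient.mk (I ^ 1) := by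
    ext x
    show (AdicCompletion.evalₐ I 1) (algebraMap R _ x) = Ideal.Quotient.mk (I ^ 1) x
    rw [AlgHom.commutes, Ideal.Quotient.algebraMap_eq]
  rw [Ideal.map_map, hcomp] at h2
  have hbot : Ideal.map (Ideal.Quotient.mk (I ^ 1)) I = ⊥ :=
    le_bot_iff.mp (Ideal.map_le_iff_le_comap.mpr
      (by rw [← RingHom.ker_eq_comap_bot, Ideal.mk_ker]; exact (pow_one I).ge))
  rw [hbot, Submodule.mem_bot] at h2
  haveI : Nontrivial (R ⧸ I ^ 1) := Ideal.Quotient.nontrivial_iff.mpr (by rw [pow_one]; exact hI)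
  exact one_ne_zero h2

end Aux

/-- Let `(S, M)` and `(B, B ∩ M)` be reduced Noetherian local rings with
`B ⊆ S`, `B̂ = Ŝ`, such that `f : Spec S → Spec B`, `f(P) = P ∩ B`, is
surjective, `f(P)S = P` for every positive-height prime `P` of `S`, and `f` is
injective on positive-height primes.  Then for every minimal prime `𝔭` of `B`
there exists a minimal prime `P` of `S` with `P ∩ B = 𝔭` and
`dim(S/P) = dim(B/𝔭)`. -/
theorem exists_minimalPrime_with_coheight_eq
    {B S : Type*} [CommRing B] [CommRing S] [Algebra B S]
    [IsNoetherianRing B] [IsNoetherianRing S] [IsLocalRing B] [IsLocalRing S]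
    [IsReduced B] [IsReduced S]
    (hinj : Function.Injective (algebraMap B S))
    (e : AdicCompletion (IsLocalRing.maximalIdeal B) B ≃+*
      AdicCompletion (IsLocalRing.maximalIdeal S) S)
    (he : ∀ b : B,
      e (algebraMap B (AdicCompletion (IsLocalRing.maximalIdeal B) B) b) =
        algebraMap S (AdicCompletion (IsLocalRing.maximalIdeal S) S) (algebraMap B S b))
    (hsurj : ∀ q : Ideal B, q.IsPrime →
      ∃ P : Ideal S, ∃ _ : P.IsPrime, P.comap (algebraMap B S) = q)
    (hext : ∀ P : Ideal S, (hP : P.IsPrime) →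
      0 < Order.height (⟨P, hP⟩ : PrimeSpectrum S) →
      (P.comap (algebraMap B S)).map (algebraMap B S) = P)
    (hinj' : ∀ P P' : Ideal S, (hP : P.IsPrime) → (hP' : P'.IsPrime) →
      0 < Order.height (⟨P, hP⟩ : PrimeSpectrum S) →
      0 < Order.height (⟨P', hP'⟩ : PrimeSpectrum S) →
      P.comap (algebraMap B S) = P'.comap (algebraMap B S) → P = P') :
    ∀ 𝔭 ∈ minimalPrimes B, ∃ P ∈ minimalPrimes S,
      P.comap (algebraMap B S) = 𝔭 ∧ ringKrullDim (S ⧸ P) = ringKrullDim (B ⧸ 𝔭) := by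
  intro 𝔭 h𝔭
  have h𝔭p : 𝔭.IsPrime := h𝔭.1.1
  set f := algebraMap B S with hf
  set T := AdicCompletion (IsLocalRing.maximalIdeal S) S with hTdef
  letI : Algebra B T := ((algebraMap S T).comp f).toAlgebra
  have hBT : algebraMap B T = (algebraMap S T).comp f := rfl
  haveI hflatST : Module.Flat S T := inferInstance
  haveI hflatBT : @Module.Flat B T _ _ Algebra.toModule := by
    set Bh := AdicCompletion (IsLocalRing.maximalIdeal B) B with hBh
    haveI hBBh : Module.Flat B Bh := inferInstance
    letI : Module B T := Algebra.toModule
    refine Module.Flat.of_linearEquiv (R := B) (M := Bh) (N := T) ?_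
    exact
      { toFun := fun t => e.symm t
        map_add' := fun x y => map_add e.symm x y
        map_smul' := by
          intro b t
          simp only [RingHom.id_apply]
          rw [Algebra.smul_def, Algebra.smul_def, map_mul]
          congr 1
          have h2 := congrArg e.symm (he b)
          rw [RingEquiv.symm_apply_apply] at h2
          rw [h2]
          rfl
        invFun := fun x => e x
        left_inv := fun t => e.apply_symm_apply t
        right_inv := fun x => e.symm_apply_apply x }
  have hcomapBT : ∀ I : Ideal T,
      I.comap (algebraMap B T) = (I.comap (algebraMap S T)).comap f := by
    intro I
    rw [hBT, ← Ideal.comap_comap]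
  have hSTne : ∀ Q : Ideal S, Q.IsPrime → Q.map (algebraMap S T) ≠ ⊤ := by
    intro Q hQ htop
    have h1 : Q ≤ IsLocalRing.maximalIdeal S := IsLocalRing.le_maximalIdeal hQ.ne_top
    have h2 : (⊤ : Ideal T) ≤ (IsLocalRing.maximalIdeal S).map (algebraMap S T) :=
      htop ▸ Ideal.map_mono h1
    exact AdicCompletion.map_ne_top_of_ne_top
      (IsLocalRing.maximalIdeal.isMaximal S).ne_top (top_le_iff.mp h2)
  -- minimal primes of S contract to minimal primes of B
  have hA : ∀ Q : Ideal S, Q ∈ minimalPrimes S → Q.comap f ∈ minimalPrimes B := by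
    intro Q hQmem
    have hQ : Q.IsPrime := hQmem.1.1
    obtain ⟨Qh, hQh, hQhc⟩ :=
      Module.Flat.exists_isPrime_comap_eq (R := S) (C := T) hQ (hSTne Q hQ)
    haveI := hQh
    obtain ⟨Q0, hQ0mem, hQ0le⟩ := Ideal.exists_minimalPrimes_le (I := (⊥ : Ideal T)) (J := Qh) bot_le
    have hQ0 : Q0.IsPrime := hQ0mem.1.1
    haveI := hQ0
    have hQ0S : Q0.comap (algebraMap S T) = Q :=
      prime_eq_of_le_minimal (Ideal.comap_isPrime _ _) hQmem (hQhc ▸ Ideal.comap_mono hQ0le)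
    haveI hqp : (Q.comap f).IsPrime := Ideal.comap_isPrime f Q
    obtain ⟨𝔭', h𝔭'mem, h𝔭'le⟩ :=
      Ideal.exists_minimalPrimes_le (I := (⊥ : Ideal B)) (J := Q.comap f) bot_le
    obtain ⟨ph, hph, hphle, hphc⟩ :=
      Module.Flat.exists_isPrime_le_comap_eq (R := B) (A := T) hQ0 h𝔭'mem.1.1
        (by rw [hcomapBT, hQ0S]; exact h𝔭'le) (Localization.AtPrime Q0)
    have hphQ0 : ph = Q0 := prime_eq_of_le_minimal hph hQ0mem hphle
    have hQf : Q.comap f = 𝔭' := by rw [← hphc, hphQ0, hcomapBT, hQ0S]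
    rw [hQf]; exact h𝔭'mem
  -- lying below
  have hLB : ∀ Q₁ : Ideal S, Q₁.IsPrime → 𝔭 ≤ Q₁.comap f →
      ∃ P₀, P₀ ∈ minimalPrimes S ∧ P₀.comap f = 𝔭 ∧ P₀ ≤ Q₁ := by
    intro Q₁ hQ₁ hle
    obtain ⟨Qh, hQh, hQhc⟩ := Module.Flat.exists_isPrime_comap_eq hQ₁ (hSTne Q₁ hQ₁)
    haveI := hQh
    obtain ⟨ph, hph, hphle, hphc⟩ :=
      Module.Flat.exists_isPrime_le_comap_eq (R := B) (A := T) hQh h𝔭p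
        (by rw [hcomapBT, hQhc]; exact hle) (Localization.AtPrime Qh)
    haveI := hph
    have hQle : ph.comap (algebraMap S T) ≤ Q₁ := hQhc ▸ Ideal.comap_mono hphle
    have hQc : (ph.comap (algebraMap S T)).comap f = 𝔭 := by rw [← hcomapBT]; exact hphc
    haveI : (ph.comap (algebraMap S T)).IsPrime := Ideal.comap_isPrime _ _
    obtain ⟨P₀, hP₀mem, hP₀le⟩ :=
      Ideal.exists_minimalPrimes_le (I := (⊥ : Ideal S)) (J := ph.comap (algebraMap S T)) bot_le
    refine ⟨P₀, hP₀mem, ?_, le_trans hP₀le hQle⟩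
    haveI := hP₀mem.1.1
    exact prime_eq_of_le_minimal (Ideal.comap_isPrime f P₀) h𝔭
      (hQc ▸ Ideal.comap_mono hP₀le)
  -- primes strictly above 𝔭 are not minimal
  have hstrict : ∀ r : Ideal B, r.IsPrime → 𝔭 ≤ r → r ≠ 𝔭 → r ∉ minimalPrimes B := by
    intro r hr hle hne hmem
    exact hne (prime_eq_of_le_minimal h𝔭p hmem hle).symm
  -- non-minimal primes of B lift to their extensions
  have hlift : ∀ r : Ideal B, r.IsPrime → r ∉ minimalPrimes B →
      ∃ Pr : Ideal S, Pr.IsPrime ∧ Pr.comap f = r ∧ Pr = r.map f := by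
    intro r hr hrmin
    obtain ⟨Pr, hPr, hPrc⟩ := hsurj r hr
    have hpos : 0 < Order.height (⟨Pr, hPr⟩ : PrimeSpectrum S) := by
      rw [height_pos_iff_not_minimal]
      intro hmem
      exact hrmin (hPrc ▸ hA Pr hmem)
    refine ⟨Pr, hPr, hPrc, ?_⟩
    rw [← hext Pr hPr hpos, hPrc]
  -- Direction 1 : dim(S/P₀) ≤ dim(B/𝔭) for each minimal P₀ over 𝔭
  have hdir1 : ∀ P₀ : Ideal S, P₀ ∈ minimalPrimes S → P₀.comap f = 𝔭 →
      ringKrullDim (S ⧸ P₀) ≤ ringKrullDim (B ⧸ 𝔭) := by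
    intro P₀ hP₀m hP₀c
    have hP₀p : P₀.IsPrime := hP₀m.1.1
    have hker : ∀ x : PrimeSpectrum (S ⧸ P₀), P₀ ≤ x.asIdeal.comap (Ideal.Quotient.mk P₀) := by
      intro x
      conv_lhs => rw [← Ideal.mk_ker (I := P₀)]
      exact Ideal.ker_le_comap _
    have hXp : ∀ x : PrimeSpectrum (S ⧸ P₀), (x.asIdeal.comap (Ideal.Quotient.mk P₀)).IsPrime :=
      fun x => Ideal.comap_isPrime _ _ (H := x.2)
    have h𝔭X : ∀ x : PrimeSpectrum (S ⧸ P₀),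
        𝔭 ≤ (x.asIdeal.comap (Ideal.Quotient.mk P₀)).comap f := by
      intro x
      rw [← hP₀c]
      exact Ideal.comap_mono (hker x)
    have hprime : ∀ x : PrimeSpectrum (S ⧸ P₀),
        (((x.asIdeal.comap (Ideal.Quotient.mk P₀)).comap f).map (Ideal.Quotient.mk 𝔭)).IsPrime := by
      intro x
      haveI := hXp x
      haveI : ((x.asIdeal.comap (Ideal.Quotient.mk P₀)).comap f).IsPrime :=
        Ideal.comap_isPrime _ _
      refine Ideal.map_isPrime_of_surjective Ideal.Quotient.mk_surjective ?_
      rw [Ideal.mk_ker]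
      exact h𝔭X x
    set g : PrimeSpectrum (S ⧸ P₀) → PrimeSpectrum (B ⧸ 𝔭) := fun x =>
      ⟨((x.asIdeal.comap (Ideal.Quotient.mk P₀)).comap f).map (Ideal.Quotient.mk 𝔭), hprime x⟩
      with hgdef
    have hg : StrictMono g := by
      intro x y hxy
      have hXY : x.asIdeal.comap (Ideal.Quotient.mk P₀) < y.asIdeal.comap (Ideal.Quotient.mk P₀) := by
        refine lt_of_le_of_ne (Ideal.comap_mono (le_of_lt hxy)) ?_
        intro hEq
        exact (ne_of_lt hxy) (PrimeSpectrum.ext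
          (Ideal.comap_injective_of_surjective _ Ideal.Quotient.mk_surjective hEq))
      set X := x.asIdeal.comap (Ideal.Quotient.mk P₀) with hXdef
      set Y := y.asIdeal.comap (Ideal.Quotient.mk P₀) with hYdef
      have hYnm : Y ∉ minimalPrimes S := fun hmem =>
        (ne_of_lt hXY) (prime_eq_of_le_minimal (hXp x) hmem (le_of_lt hXY))
      have hYpos : 0 < Order.height (⟨Y, hXp y⟩ : PrimeSpectrum S) :=
        (height_pos_iff_not_minimal (hXp y)).mpr hYnm
      have hc : X.comap f < Y.comap f := by
        refine lt_of_le_of_ne (Ideal.comap_mono (le_of_lt hXY)) ?_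
        intro hEq
        by_cases hX0 : X = P₀
        · have hYc : Y.comap f = 𝔭 := by rw [← hEq, hX0, hP₀c]
          have hYle : Y ≤ P₀ := by
            rw [← hext Y (hXp y) hYpos, hYc, ← hP₀c]
            exact Ideal.map_comap_le
          exact absurd hYle (not_le_of_gt (hX0 ▸ hXY))
        · have hXnm : X ∉ minimalPrimes S := fun hmem =>
            hX0 (prime_eq_of_le_minimal hP₀p hmem (hker x)).symm
          have hXpos : 0 < Order.height (⟨X, hXp x⟩ : PrimeSpectrum S) :=
            (height_pos_iff_not_minimal (hXp x)).mpr hXnm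
          exact (ne_of_lt hXY) (hinj' X Y (hXp x) (hXp y) hXpos hYpos hEq)
      have hlt : (g x).asIdeal < (g y).asIdeal := by
        refine lt_of_le_of_ne (Ideal.map_mono (le_of_lt hc)) ?_
        intro hEq2
        have h3 := congrArg (Ideal.comap (Ideal.Quotient.mk 𝔭)) hEq2
        rw [Ideal.comap_map_of_surjective _ Ideal.Quotient.mk_surjective,
          Ideal.comap_map_of_surjective _ Ideal.Quotient.mk_surjective,
          ← RingHom.ker_eq_comap_bot, Ideal.mk_ker,
          sup_eq_left.mpr (h𝔭X x), sup_eq_left.mpr (h𝔭X y)] at h3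
        exact (ne_of_lt hc) h3
      exact (PrimeSpectrum.asIdeal_lt_asIdeal _ _).mp hlt
    exact Order.krullDim_le_of_strictMono g hg
  -- Direction 2 claim, per chain
  have claim : ∀ c : LTSeries (PrimeSpectrum (B ⧸ 𝔭)), ∃ P₀, P₀ ∈ minimalPrimes S ∧
      P₀.comap f = 𝔭 ∧ (c.length : WithBot ℕ∞) ≤ ringKrullDim (S ⧸ P₀) := by
    intro c
    set n := c.length with hn
    set r : Fin (n + 1) → Ideal B := fun i => (c i).asIdeal.comap (Ideal.Quotient.mk 𝔭) with hrdef
    have hrp : ∀ i, (r i).IsPrime := fun i => Ideal.comap_isPrime _ _ (H := (c i).2)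
    have hr𝔭 : ∀ i, 𝔭 ≤ r i := by
      intro i
      rw [hrdef]
      conv_lhs => rw [← Ideal.mk_ker (I := 𝔭)]
      exact Ideal.ker_le_comap _
    have hrmono : ∀ {i j : Fin (n + 1)}, i < j → r i < r j := by
      intro i j hij
      have hcij := c.strictMono hij
      refine lt_of_le_of_ne (Ideal.comap_mono (le_of_lt hcij)) (fun hEq => (ne_of_lt hcij) ?_)
      exact PrimeSpectrum.ext
        (Ideal.comap_injective_of_surjective _ Ideal.Quotient.mk_surjective hEq)
    have hne0 : ∀ i : Fin (n + 1), (0 : Fin (n + 1)) < i → r i ≠ 𝔭 := by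
      intro i hi heq
      have h1 := hrmono hi
      rw [heq] at h1
      exact absurd (hr𝔭 0) (not_le_of_gt h1)
    have hQ : ∀ i : Fin (n + 1), (0 : Fin (n + 1)) < i →
        ((r i).map f).IsPrime ∧ ((r i).map f).comap f = r i := by
      intro i hi
      obtain ⟨Pr, hPr, hPrc, hPre⟩ := hlift (r i) (hrp i)
        (hstrict (r i) (hrp i) (hr𝔭 i) (hne0 i hi))
      rw [hPre] at hPr hPrc
      exact ⟨hPr, hPrc⟩
    rcases Nat.eq_zero_or_pos n with h0 | hposn
    · obtain ⟨P, hP, hPc⟩ := hsurj 𝔭 h𝔭p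
      obtain ⟨P₀, h1, h2, _⟩ := hLB P hP (le_of_eq hPc.symm)
      refine ⟨P₀, h1, h2, ?_⟩
      haveI : Nontrivial (S ⧸ P₀) := Ideal.Quotient.nontrivial_iff.mpr h1.1.1.ne_top
      have h3 : (0 : WithBot ℕ∞) ≤ ringKrullDim (S ⧸ P₀) := Order.krullDim_nonneg
      rw [h0]
      simpa using h3
    · have h01 : (0 : Fin (n + 1)) < ⟨1, by omega⟩ := by
        rw [Fin.lt_def]; simp
      obtain ⟨hQ1p, hQ1c⟩ := hQ ⟨1, by omega⟩ h01
      obtain ⟨P₀, hP₀m, hP₀c, hP₀le⟩ := hLB ((r ⟨1, by omega⟩).map f) hQ1p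
        (by rw [hQ1c]; exact hr𝔭 _)
      have hP₀p : P₀.IsPrime := hP₀m.1.1
      refine ⟨P₀, hP₀m, hP₀c, ?_⟩
      set G : Fin (n + 1) → Ideal S :=
        fun i => if (0 : Fin (n + 1)) < i then (r i).map f else P₀ with hGdef
      have hG0 : G 0 = P₀ := by simp [hGdef]
      have hGpos : ∀ i, (0 : Fin (n + 1)) < i → G i = (r i).map f := by
        intro i hi; simp [hGdef, hi]
      have hGp : ∀ i, (G i).IsPrime := by
        intro i
        by_cases hi : (0 : Fin (n + 1)) < i
        · rw [hGpos i hi]; exact (hQ i hi).1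
        · have hieq : i = 0 := le_antisymm (not_lt.mp hi) (Fin.zero_le i)
          rw [hieq, hG0]; exact hP₀p
      have hGP₀ : ∀ i, P₀ ≤ G i := by
        intro i
        by_cases hi : (0 : Fin (n + 1)) < i
        · rw [hGpos i hi]
          refine le_trans hP₀le (Ideal.map_mono ?_)
          have h1i : (⟨1, by omega⟩ : Fin (n + 1)) ≤ i := by
            rw [Fin.le_def]
            have := (Fin.lt_def ..).mp hi
            exact Nat.succ_le_of_lt this
          rcases eq_or_lt_of_le h1i with h | h
          · rw [h]
          · exact le_of_lt (hrmono h)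
        · have hieq : i = 0 := le_antisymm (not_lt.mp hi) (Fin.zero_le i)
          rw [hieq, hG0]
      have hGmono : ∀ {i j : Fin (n + 1)}, i < j → G i < G j := by
        intro i j hij
        have hj : (0 : Fin (n + 1)) < j := lt_of_le_of_lt (Fin.zero_le i) hij
        by_cases hi : (0 : Fin (n + 1)) < i
        · rw [hGpos i hi, hGpos j hj]
          refine lt_of_le_of_ne (Ideal.map_mono (le_of_lt (hrmono hij))) (fun hEq => ?_)
          have h3 := congrArg (Ideal.comap f) hEq
          rw [(hQ i hi).2, (hQ j hj).2] at h3
          exact (ne_of_lt (hrmono hij)) h3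
        · have hieq : i = 0 := le_antisymm (not_lt.mp hi) (Fin.zero_le i)
          rw [hieq, hG0, hGpos j hj]
          refine lt_of_le_of_ne ?_ (fun hEq => ?_)
          · have h4 := hGP₀ j
            rw [hGpos j hj] at h4
            exact h4
          · have h3 := congrArg (Ideal.comap f) hEq
            rw [hP₀c, (hQ j hj).2] at h3
            exact (hne0 j hj) h3.symm
      have hkerG : ∀ i, RingHom.ker (Ideal.Quotient.mk P₀) ≤ G i := by
        intro i; rw [Ideal.mk_ker]; exact hGP₀ i
      have hFp : ∀ i, ((G i).map (Ideal.Quotient.mk P₀)).IsPrime := by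
        intro i
        haveI := hGp i
        exact Ideal.map_isPrime_of_surjective Ideal.Quotient.mk_surjective (hkerG i)
      set F : Fin (n + 1) → PrimeSpectrum (S ⧸ P₀) :=
        fun i => ⟨(G i).map (Ideal.Quotient.mk P₀), hFp i⟩ with hFdef
      have hFmono : ∀ i : Fin n, F i.castSucc < F i.succ := by
        intro i
        have hij : (i.castSucc : Fin (n + 1)) < i.succ := Fin.castSucc_lt_succ (i := i)
        have hGij := hGmono hij
        have hlt : (G i.castSucc).map (Ideal.Quotient.mk P₀) <
            (G i.succ).map (Ideal.Quotient.mk P₀) := by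
          refine lt_of_le_of_ne (Ideal.map_mono (le_of_lt hGij)) (fun hEq => ?_)
          have h3 := congrArg (Ideal.comap (Ideal.Quotient.mk P₀)) hEq
          rw [Ideal.comap_map_of_surjective _ Ideal.Quotient.mk_surjective,
            Ideal.comap_map_of_surjective _ Ideal.Quotient.mk_surjective,
            ← RingHom.ker_eq_comap_bot,
            sup_eq_left.mpr (hkerG i.castSucc), sup_eq_left.mpr (hkerG i.succ)] at h3
          exact (ne_of_lt hGij) h3
        exact (PrimeSpectrum.asIdeal_lt_asIdeal _ _).mp hlt
      have hfin := Order.LTSeries.length_le_krullDim (⟨n, F, hFmono⟩ : LTSeries (PrimeSpectrum (S ⧸ P₀)))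
      exact hfin
  -- finish : pick the minimal prime over 𝔭 with maximal coheight
  have hAne : {P : Ideal S | P ∈ minimalPrimes S ∧ P.comap f = 𝔭}.Nonempty := by
    obtain ⟨P, hP, hPc⟩ := hsurj 𝔭 h𝔭p
    obtain ⟨P₀, h1, h2, _⟩ := hLB P hP (le_of_eq hPc.symm)
    exact ⟨P₀, h1, h2⟩
  have hAfin : {P : Ideal S | P ∈ minimalPrimes S ∧ P.comap f = 𝔭}.Finite :=
    (minimalPrimes.finite_of_isNoetherianRing S).subset (fun P hP => hP.1)
  obtain ⟨Pmax, hPmaxA, hPmax⟩ := Set.Finite.exists_maximalFor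
    (fun P => ringKrullDim (S ⧸ P)) _ hAfin hAne
  have hPmaxMax : ∀ P ∈ {P : Ideal S | P ∈ minimalPrimes S ∧ P.comap f = 𝔭},
      ringKrullDim (S ⧸ P) ≤ ringKrullDim (S ⧸ Pmax) := by
    intro P hP
    rcases le_total (ringKrullDim (S ⧸ P)) (ringKrullDim (S ⧸ Pmax)) with h | h
    · exact h
    · exact hPmax hP h
  refine ⟨Pmax, hPmaxA.1, hPmaxA.2, le_antisymm (hdir1 Pmax hPmaxA.1 hPmaxA.2) ?_⟩
  have hrw : ringKrullDim (B ⧸ 𝔭) =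
      ⨆ (c : LTSeries (PrimeSpectrum (B ⧸ 𝔭))), (c.length : WithBot ℕ∞) := rfl
  rw [hrw]
  refine iSup_le fun c => ?_
  obtain ⟨P₀, hP₀m, hP₀c, hlen⟩ := claim c
  exact le_trans hlen (hPmaxMax P₀ ⟨hP₀m, hP₀c⟩)
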